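/- Let X be a compact topological space, x₁,…,x_n ∈ X, and let V := C(X, ℝ) with the supremum norm and its Borel σ-algebra. Let U be a real inner product space together with an injective linear map ι : U → V and elements φ₁,…,φ_n ∈ U such that (ι u)(x_k) = ⟨u, φ_k⟩_U for all u ∈ U and k, ⟨φ_k, φ_k⟩_U ≤ G_max for all k, and ‖ι u‖_∞ ≤ c ‖u‖_U for some constant c. Let σ : ℝ → ℝ be L-Lipschitz, and let μ_base be a probability measure on ℝ × V with ā := ∫ |a| dμ_base < ∞ and (a,h) ↦ a σ(h(x_k)) μ_base-integrable for each k. For κ ≥ 0, let F†_∞(U, μ_base, κ) be the set of functions f : X → ℝ for which there exist a probability measure μ on ℝ × V and a probability measure π on ℝ × V × V such that: the pushforward of π under (a,h,h') ↦ (a,h) is μ_base, the pushforward under (a,h,h') ↦ (a,h') is μ, the set { (a,h,h') : there is u ∈ U with ‖u‖_U ≤ κ and h' = h + ι u } has π-outer measure 1, and for every x ∈ X, (a,h') ↦ a σ(h'(x)) is μ-integrable with f(x) = ∫ a σ(h'(x)) dμ(a,h'). Then R̂(F†_∞(U, μ_base, κ)) ≤ L ā √G_max · κ / √n. -/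

import Mathlib

open MeasureTheory

noncomputable section

/-- The set of signed sums `∑_k τ_k f(x_k)`, `f ∈ 𝒜`, for a fixed sign pattern
`s` (with `true ↦ +1`, `false ↦ -1`). -/
def radSet {X : Type*} (n : ℕ) (x : Fin n → X) (𝒜 : Set (X → ℝ))
    (s : Fin n → Bool) : Set ℝ :=
  {r : ℝ | ∃ f ∈ 𝒜, r = ∑ k : Fin n, (if s k then (1 : ℝ) else -1) * f (x k)}

/-- The empirical Rademacher complexity
`R̂(𝒜) = (1/n) E_τ [ sup_{f ∈ 𝒜} ∑_k τ_k f(x_k) ]`, the expectation over the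
uniform sign vector written as an average over all `2^n` sign patterns. -/
def empRad {X : Type*} (n : ℕ) (x : Fin n → X) (𝒜 : Set (X → ℝ)) : ℝ :=
  (n : ℝ)⁻¹ * ((2 ^ n : ℝ))⁻¹ * ∑ s : Fin n → Bool, sSup (radSet n x 𝒜 s)

end

noncomputable section

/-- Continuous function spaces are equipped with the Borel σ-algebra of their
(compact-open) topology; for a compact domain this is the Borel σ-algebra of
the supremum norm. -/
instance instContinuousMapMeasurableSpace (X : Type*) [TopologicalSpace X] :
    MeasurableSpace C(X, ℝ) := borel C(X, ℝ)

open Set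



section Aux
variable {n : ℕ}

/-- sign of a boolean -/
noncomputable def eps (s : Fin n → Bool) (k : Fin n) : ℝ := if s k then 1 else -1

lemma eps_abs (s : Fin n → Bool) (k : Fin n) : |eps s k| = 1 := by
  unfold eps; split <;> simp

/-- flipping coordinate `k` -/
def flipAt (k : Fin n) : Equiv.Perm (Fin n → Bool) :=
  Function.Involutive.toPerm (fun s => Function.update s k (!(s k))) (by
    intro s; funext j
    rcases eq_or_ne j k with rfl | hj
    · simp
    · simp [Function.update_of_ne hj])

lemma flipAt_apply_self (s : Fin n → Bool) (k : Fin n) :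
    (flipAt k s) k = !(s k) := by simp [flipAt, Function.Involutive.toPerm]

lemma flipAt_apply_ne (s : Fin n → Bool) {j k : Fin n} (h : j ≠ k) :
    (flipAt k s) j = s j := by
  simp [flipAt, Function.Involutive.toPerm, Function.update_of_ne h]

lemma eps_flipAt_self (s : Fin n → Bool) (k : Fin n) :
    eps (flipAt k s) k = - eps s k := by
  unfold eps; rw [flipAt_apply_self]; cases s k <;> simp

lemma eps_flipAt_ne (s : Fin n → Bool) {j k : Fin n} (h : j ≠ k) :
    eps (flipAt k s) j = eps s j := by
  unfold eps; rw [flipAt_apply_ne s h]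

lemma flip_sum_zero (k : Fin n) (g : (Fin n → Bool) → ℝ)
    (hg : ∀ s, g (flipAt k s) = - g s) : ∑ s : Fin n → Bool, g s = 0 := by
  have h1 : ∑ s : Fin n → Bool, g (flipAt k s) = ∑ s : Fin n → Bool, g s :=
    Equiv.sum_comp (flipAt k) g
  have h2 : ∑ s : Fin n → Bool, g (flipAt k s) = - ∑ s : Fin n → Bool, g s := by
    simp only [hg]; exact Finset.sum_neg_distrib (f := g)
  linarith

/-- core one-coordinate contraction inequality for suprema -/
lemma core_contraction {ι : Type*} [Nonempty ι] (A d g : ι → ℝ) (M : ℝ)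
    (hLip : ∀ p q, d p - d q ≤ M * |g p - g q|)
    (b1 : BddAbove (Set.range fun p => A p + M * g p))
    (b2 : BddAbove (Set.range fun p => A p - M * g p)) :
    sSup (Set.range fun p => A p + d p) + sSup (Set.range fun p => A p - d p)
      ≤ sSup (Set.range fun p => A p + M * g p)
        + sSup (Set.range fun p => A p - M * g p) := by
  set R1 := sSup (Set.range fun p => A p + M * g p) with hR1
  set R2 := sSup (Set.range fun p => A p - M * g p) with hR2
  have key : ∀ p q, (A p + d p) + (A q - d q) ≤ R1 + R2 := by
    intro p q
    have h := hLip p q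
    rcases le_total (g q) (g p) with h' | h'
    · rw [abs_of_nonneg (by linarith)] at h
      have e1 : A p + M * g p ≤ R1 := le_csSup b1 ⟨p, rfl⟩
      have e2 : A q - M * g q ≤ R2 := le_csSup b2 ⟨q, rfl⟩
      nlinarith
    · rw [abs_of_nonpos (by linarith)] at h
      have e1 : A q + M * g q ≤ R1 := le_csSup b1 ⟨q, rfl⟩
      have e2 : A p - M * g p ≤ R2 := le_csSup b2 ⟨p, rfl⟩
      nlinarith
  have hS2 : ∀ p, sSup (Set.range fun q => A q - d q) ≤ R1 + R2 - (A p + d p) := by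
    intro p
    apply csSup_le (Set.range_nonempty _)
    rintro r ⟨q, rfl⟩
    dsimp only
    linarith [key p q]
  have hS1 : sSup (Set.range fun p => A p + d p)
      ≤ R1 + R2 - sSup (Set.range fun q => A q - d q) := by
    apply csSup_le (Set.range_nonempty _)
    rintro r ⟨p, rfl⟩
    dsimp only
    linarith [hS2 p]
  linarith

end Aux

section Contraction

variable {n : ℕ}

lemma rad_contraction (K : Set (Fin n → ℝ)) (hK : K.Nonempty)
    (C : ℝ) (hC : 0 ≤ C) (hKb : ∀ t ∈ K, ∀ k, |t k| ≤ C)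
    (M : ℝ) (hM : 0 ≤ M)
    (θ : Fin n → ℝ → ℝ) (hθ0 : ∀ k, θ k 0 = 0)
    (hθ : ∀ k t t', θ k t - θ k t' ≤ M * |t - t'|) :
    ∑ s : Fin n → Bool, sSup ((fun t => ∑ k, eps s k * θ k (t k)) '' K)
      ≤ ∑ s : Fin n → Bool, sSup ((fun t => ∑ k, eps s k * (M * t k)) '' K) := by
  classical
  haveI : Nonempty ↥K := hK.to_subtype
  set P : (ℝ → ℝ) → Prop := fun f => f 0 = 0 ∧ ∀ t t', f t - f t' ≤ M * |t - t'| with hP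
  have Plin : P (fun t => M * t) := by
    refine ⟨mul_zero M, fun t t' => ?_⟩
    rw [← mul_sub]
    exact mul_le_mul_of_nonneg_left (le_abs_self _) hM
  have Pθ : ∀ k, P (θ k) := fun k => ⟨hθ0 k, hθ k⟩
  have Pabs : ∀ f, P f → ∀ u : ℝ, |u| ≤ C → |f u| ≤ M * C := by
    intro f hf u hu
    have h1 : f u ≤ M * |u| := by
      have h := hf.2 u 0
      rw [hf.1, sub_zero, sub_zero] at h
      exact h
    have h2 : -(f u) ≤ M * |u| := by
      have h := hf.2 0 u
      rw [hf.1, zero_sub, zero_sub, abs_neg] at h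
      exact h
    have h3 : M * |u| ≤ M * C := mul_le_mul_of_nonneg_left hu hM
    rw [abs_le]; constructor <;> linarith
  set V : (Fin n → ℝ → ℝ) → ℝ :=
    fun c => ∑ s : Fin n → Bool, sSup ((fun t => ∑ k, eps s k * c k (t k)) '' K) with hV
  have elem_bound : ∀ (c : Fin n → ℝ → ℝ), (∀ k, P (c k)) →
      ∀ (s : Fin n → Bool) (E : Finset (Fin n)) (t : Fin n → ℝ), t ∈ K →
      (∑ k ∈ E, eps s k * c k (t k)) ≤ (n : ℝ) * (M * C) := by
    intro c hc s E t ht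
    calc ∑ k ∈ E, eps s k * c k (t k) ≤ ∑ k ∈ E, (M * C) := by
          apply Finset.sum_le_sum
          intro k _
          calc eps s k * c k (t k) ≤ |eps s k * c k (t k)| := le_abs_self _
            _ = |c k (t k)| := by rw [abs_mul, eps_abs, one_mul]
            _ ≤ M * C := Pabs _ (hc k) _ (hKb t ht k)
      _ = (E.card : ℝ) * (M * C) := by rw [Finset.sum_const, nsmul_eq_mul]
      _ ≤ (n : ℝ) * (M * C) := by
          apply mul_le_mul_of_nonneg_right _ (mul_nonneg hM hC)
          have hcard : E.card ≤ n := by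
            simpa using Finset.card_le_card (Finset.subset_univ E)
          exact_mod_cast hcard
  have onestep : ∀ (c : Fin n → ℝ → ℝ), (∀ k, P (c k)) → ∀ j : Fin n,
      V c ≤ V (Function.update c j (fun t => M * t)) := by
    intro c hc j
    set c' := Function.update c j (fun t => M * t) with hc'
    have pair : ∀ s : Fin n → Bool,
        sSup ((fun t => ∑ k, eps s k * c k (t k)) '' K)
          + sSup ((fun t => ∑ k, eps (flipAt j s) k * c k (t k)) '' K)
        ≤ sSup ((fun t => ∑ k, eps s k * c' k (t k)) '' K)
          + sSup ((fun t => ∑ k, eps (flipAt j s) k * c' k (t k)) '' K) := by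
      intro s
      have e1 : (fun t => ∑ k, eps s k * c k (t k)) '' K
          = Set.range (fun p : ↥K =>
              (∑ k ∈ Finset.univ.erase j, eps s k * c k (p.val k))
                + eps s j * c j (p.val j)) := by
        rw [Set.image_eq_range]
        refine congrArg Set.range (funext fun p => ?_)
        exact (Finset.sum_erase_add _ _ (Finset.mem_univ j)).symm
      have e2 : (fun t => ∑ k, eps (flipAt j s) k * c k (t k)) '' K
          = Set.range (fun p : ↥K =>
              (∑ k ∈ Finset.univ.erase j, eps s k * c k (p.val k))
                - eps s j * c j (p.val j)) := by
        rw [Set.image_eq_range]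
        refine congrArg Set.range (funext fun p => ?_)
        rw [← Finset.sum_erase_add _ _ (Finset.mem_univ j)]
        have hcon : ∀ k ∈ Finset.univ.erase j,
            eps (flipAt j s) k * c k (p.val k) = eps s k * c k (p.val k) := by
          intro k hk
          rw [eps_flipAt_ne s (Finset.ne_of_mem_erase hk)]
        rw [Finset.sum_congr rfl hcon, eps_flipAt_self]
        ring
      have e3 : (fun t => ∑ k, eps s k * c' k (t k)) '' K
          = Set.range (fun p : ↥K =>
              (∑ k ∈ Finset.univ.erase j, eps s k * c k (p.val k))
                + M * (eps s j * (p.val j))) := by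
        rw [Set.image_eq_range]
        refine congrArg Set.range (funext fun p => ?_)
        rw [← Finset.sum_erase_add _ _ (Finset.mem_univ j)]
        have hcon : ∀ k ∈ Finset.univ.erase j,
            eps s k * c' k (p.val k) = eps s k * c k (p.val k) := by
          intro k hk
          rw [hc', Function.update_of_ne (Finset.ne_of_mem_erase hk)]
        rw [Finset.sum_congr rfl hcon, hc', Function.update_self]
        ring
      have e4 : (fun t => ∑ k, eps (flipAt j s) k * c' k (t k)) '' K
          = Set.range (fun p : ↥K =>
              (∑ k ∈ Finset.univ.erase j, eps s k * c k (p.val k))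
                - M * (eps s j * (p.val j))) := by
        rw [Set.image_eq_range]
        refine congrArg Set.range (funext fun p => ?_)
        rw [← Finset.sum_erase_add _ _ (Finset.mem_univ j)]
        have hcon : ∀ k ∈ Finset.univ.erase j,
            eps (flipAt j s) k * c' k (p.val k) = eps s k * c k (p.val k) := by
          intro k hk
          rw [eps_flipAt_ne s (Finset.ne_of_mem_erase hk), hc',
            Function.update_of_ne (Finset.ne_of_mem_erase hk)]
        rw [Finset.sum_congr rfl hcon, eps_flipAt_self, hc', Function.update_self]
        ring
      have hLip : ∀ p q : ↥K,
          eps s j * c j (p.val j) - eps s j * c j (q.val j)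
            ≤ M * |eps s j * (p.val j) - eps s j * (q.val j)| := by
        intro p q
        have h1 := (hc j).2 (p.val j) (q.val j)
        have h2 := (hc j).2 (q.val j) (p.val j)
        have habs : |eps s j * (p.val j) - eps s j * (q.val j)| = |p.val j - q.val j| := by
          rw [← mul_sub, abs_mul, eps_abs, one_mul]
        rw [habs]
        unfold eps
        split_ifs with h
        · rw [one_mul, one_mul]; exact h1
        · rw [neg_one_mul, neg_one_mul]
          have heq : -(c j (p.val j)) - -(c j (q.val j))
              = c j (q.val j) - c j (p.val j) := by ring
          rw [heq, abs_sub_comm]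
          exact h2
      have habs2 : ∀ p : ↥K, |M * (eps s j * (p.val j))| ≤ M * C := by
        intro p
        rw [abs_mul, abs_mul, eps_abs, one_mul, abs_of_nonneg hM]
        exact mul_le_mul_of_nonneg_left (hKb p.val p.2 j) hM
      have b1 : BddAbove (Set.range fun p : ↥K =>
          (∑ k ∈ Finset.univ.erase j, eps s k * c k (p.val k))
            + M * (eps s j * (p.val j))) := by
        refine ⟨(n : ℝ) * (M * C) + M * C, ?_⟩
        rintro r ⟨p, rfl⟩
        dsimp only
        have h1 := elem_bound c hc s (Finset.univ.erase j) p.val p.2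
        have h2 : M * (eps s j * (p.val j)) ≤ M * C := (le_abs_self _).trans (habs2 p)
        linarith
      have b2 : BddAbove (Set.range fun p : ↥K =>
          (∑ k ∈ Finset.univ.erase j, eps s k * c k (p.val k))
            - M * (eps s j * (p.val j))) := by
        refine ⟨(n : ℝ) * (M * C) + M * C, ?_⟩
        rintro r ⟨p, rfl⟩
        dsimp only
        have h1 := elem_bound c hc s (Finset.univ.erase j) p.val p.2
        have h2 : -(M * (eps s j * (p.val j))) ≤ M * C := (neg_le_abs _).trans (habs2 p)
        linarith
      rw [e1, e2, e3, e4]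
      exact core_contraction
        (fun p : ↥K => ∑ k ∈ Finset.univ.erase j, eps s k * c k (p.val k))
        (fun p : ↥K => eps s j * c j (p.val j))
        (fun p : ↥K => eps s j * (p.val j)) M hLip b1 b2
    have reidx : ∀ c0 : Fin n → ℝ → ℝ,
        ∑ s : Fin n → Bool, sSup ((fun t => ∑ k, eps (flipAt j s) k * c0 k (t k)) '' K)
          = ∑ s : Fin n → Bool, sSup ((fun t => ∑ k, eps s k * c0 k (t k)) '' K) :=
      fun c0 => Fintype.sum_equiv (flipAt j) _ _ (fun s => rfl)
    have key : V c + V c ≤ V c' + V c' := by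
      calc V c + V c
          = ∑ s : Fin n → Bool, (sSup ((fun t => ∑ k, eps s k * c k (t k)) '' K)
              + sSup ((fun t => ∑ k, eps (flipAt j s) k * c k (t k)) '' K)) := by
            rw [Finset.sum_add_distrib, reidx c]
        _ ≤ ∑ s : Fin n → Bool, (sSup ((fun t => ∑ k, eps s k * c' k (t k)) '' K)
              + sSup ((fun t => ∑ k, eps (flipAt j s) k * c' k (t k)) '' K)) :=
            Finset.sum_le_sum (fun s _ => pair s)
        _ = V c' + V c' := by
            rw [Finset.sum_add_distrib, reidx c']
    linarith
  set cm : ℕ → Fin n → ℝ → ℝ := fun m k => if k.val < m then (fun t => M * t) else θ k with hcm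
  have hcmP : ∀ m k, P (cm m k) := by
    intro m k
    by_cases h : k.val < m
    · simp only [hcm, if_pos h]; exact Plin
    · simp only [hcm, if_neg h]; exact Pθ k
  have step : ∀ m : ℕ, V (cm m) ≤ V (cm (m + 1)) := by
    intro m
    by_cases hm : m < n
    · have hupd : cm (m + 1) = Function.update (cm m) ⟨m, hm⟩ (fun t => M * t) := by
        funext k
        rcases eq_or_ne k ⟨m, hm⟩ with rfl | hk
        · rw [Function.update_self]
          simp only [hcm]
          rw [if_pos (Nat.lt_succ_self m)]
        · rw [Function.update_of_ne hk]
          have hkm : k.val ≠ m := fun h => hk (Fin.ext h)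
          simp only [hcm]
          exact if_congr (by omega) rfl rfl
      rw [hupd]
      exact onestep (cm m) (hcmP m) ⟨m, hm⟩
    · have heq : cm (m + 1) = cm m := by
        funext k
        simp only [hcm]
        have hk := k.isLt
        exact if_congr (by omega) rfl rfl
      rw [heq]
  have chain : ∀ m : ℕ, V (cm 0) ≤ V (cm m) := by
    intro m
    induction m with
    | zero => exact le_refl _
    | succ m ih => exact ih.trans (step m)
  have hzero : cm 0 = θ := by
    funext k; simp only [hcm]; rw [if_neg (Nat.not_lt_zero _)]
  have hend : cm n = fun _ => (fun t => M * t) := by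
    funext k; simp only [hcm]; rw [if_pos k.isLt]
  have final := chain n
  rw [hzero, hend] at final
  simp only [hV] at final
  exact final

end Contraction


lemma sSup_image_dense {α : Type*} [TopologicalSpace α] (F : α → ℝ) (hF : Continuous F)
    (K D : Set α) (hD : D ⊆ K) (hKD : K ⊆ closure D) (hDne : D.Nonempty)
    (hbdd : BddAbove (F '' K)) (hKne : K.Nonempty) : sSup (F '' K) = sSup (F '' D) := by
  apply le_antisymm
  · apply csSup_le (hKne.image F)
    rintro r ⟨t, ht, rfl⟩
    have h1 : F t ∈ closure (F '' D) := mem_closure_image hF.continuousAt (hKD ht)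
    have h2 : closure (F '' D) ⊆ Set.Iic (sSup (F '' D)) :=
      closure_minimal (fun z hz => le_csSup (hbdd.mono (Set.image_mono hD)) hz) isClosed_Iic
    exact h2 h1
  · exact csSup_le_csSup hbdd (hDne.image F) (Set.image_mono hD)

lemma exists_countable_dense_subset'' {m : ℕ} (K : Set (Fin m → ℝ)) (hK : K.Nonempty) :
    ∃ D : Set (Fin m → ℝ), D.Countable ∧ D ⊆ K ∧ K ⊆ closure D ∧ D.Nonempty := by
  obtain ⟨D0, hD0c, hD0d⟩ := TopologicalSpace.exists_countable_dense (↥K)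
  have hD0ne : D0.Nonempty := by
    haveI : Nonempty ↥K := hK.to_subtype
    exact closure_nonempty_iff.mp ⟨Classical.arbitrary ↥K, hD0d.closure_eq ▸ trivial⟩
  refine ⟨Subtype.val '' D0, hD0c.image _, ?_, ?_, hD0ne.image _⟩
  · rintro _ ⟨p, _, rfl⟩; exact p.2
  · intro t ht
    have h1 : (⟨t, ht⟩ : ↥K) ∈ closure D0 := hD0d _
    have h2 := image_closure_subset_closure_image
      (f := (Subtype.val : ↥K → (Fin m → ℝ))) (s := D0) continuous_subtype_val
    exact h2 ⟨_, h1, rfl⟩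

lemma null_of_measurable_subset_compl {α : Type*} [MeasurableSpace α] (π : Measure α)
    [IsProbabilityMeasure π] {S A : Set α} (hS : π S = 1) (hA : MeasurableSet A)
    (hsub : A ⊆ Sᶜ) : π A = 0 := by
  have h1 : S ⊆ Aᶜ := fun w hw hwA => hsub hwA hw
  have h2 : π Aᶜ = 1 := le_antisymm prob_le_one (hS ▸ measure_mono h1)
  have h3 := measure_add_measure_compl (μ := π) hA
  rw [h2, measure_univ] at h3
  have h4 : π A + 1 = 0 + 1 := by rw [h3, zero_add]
  exact (ENNReal.add_left_inj ENNReal.one_ne_top).mp h4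

/-- Rademacher complexity of the transport-based function
class `F†_∞(U, μ_base, κ)` over an RKHS with kernel bounded by `G_max`. -/
theorem rademacher_transport_class_rkhs
    (X : Type*) [TopologicalSpace X] [CompactSpace X] (n : ℕ) (x : Fin n → X)
    (U : Type*) [NormedAddCommGroup U] [InnerProductSpace ℝ U]
    (ι : U →ₗ[ℝ] C(X, ℝ)) (hι_inj : Function.Injective ι)
    (hι_bdd : ∃ c : ℝ, ∀ u : U, ‖ι u‖ ≤ c * ‖u‖)
    (φ : Fin n → U)
    (hev : ∀ (u : U) (k : Fin n), (ι u) (x k) = (inner ℝ u (φ k) : ℝ))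
    (Gmax : ℝ) (hGmax0 : 0 ≤ Gmax)
    (hφ : ∀ k : Fin n, (inner ℝ (φ k) (φ k) : ℝ) ≤ Gmax)
    (σ : ℝ → ℝ) (L : NNReal) (hσ_lip : LipschitzWith L σ)
    (μbase : Measure (ℝ × C(X, ℝ))) (hμbase : IsProbabilityMeasure μbase)
    (hInt_a : Integrable (fun w : ℝ × C(X, ℝ) => |w.1|) μbase)
    (hInt_k : ∀ k : Fin n,
      Integrable (fun w : ℝ × C(X, ℝ) => w.1 * σ (w.2 (x k))) μbase)
    (κ : ℝ) (hκ : 0 ≤ κ)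
    -- the transport-based class `F†_∞(U, μ_base, κ)`
    (F : Set (X → ℝ))
    (hF : F = {f : X → ℝ | ∃ μ : Measure (ℝ × C(X, ℝ)),
      ∃ π : Measure (ℝ × C(X, ℝ) × C(X, ℝ)),
      IsProbabilityMeasure μ ∧ IsProbabilityMeasure π ∧
      π.map (fun w : ℝ × C(X, ℝ) × C(X, ℝ) => (w.1, w.2.1)) = μbase ∧
      π.map (fun w : ℝ × C(X, ℝ) × C(X, ℝ) => (w.1, w.2.2)) = μ ∧
      π {w : ℝ × C(X, ℝ) × C(X, ℝ) |
          ∃ u : U, ‖u‖ ≤ κ ∧ w.2.2 = w.2.1 + ι u} = 1 ∧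
      ∀ x' : X, Integrable (fun w : ℝ × C(X, ℝ) => w.1 * σ (w.2 x')) μ ∧
        f x' = ∫ w : ℝ × C(X, ℝ), w.1 * σ (w.2 x') ∂μ})
    -- the suprema in the Rademacher complexity are assumed finite
    (hFbdd : ∀ s : Fin n → Bool, BddAbove (radSet n x F s)) :
    empRad n x F ≤ (L : ℝ) * (∫ w : ℝ × C(X, ℝ), |w.1| ∂μbase) *
      Real.sqrt Gmax * κ / Real.sqrt n := by

  classical
  haveI : BorelSpace C(X, ℝ) := ⟨rfl⟩
  haveI := hμbase
  -- trivial case n = 0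
  rcases Nat.eq_zero_or_pos n with hn0 | hnpos
  · subst hn0
    simp [empRad, Real.sqrt_zero]
  -- trivial case F = ∅
  rcases Set.eq_empty_or_nonempty F with hFe | hFne
  · have hrad : ∀ s : Fin n → Bool, radSet n x F s = ∅ := by
      intro s
      ext r
      simp [radSet, hFe]
    have : empRad n x F = 0 := by
      simp [empRad, hrad, Real.sSup_empty]
    rw [this]
    apply div_nonneg _ (Real.sqrt_nonneg _)
    have habar : 0 ≤ ∫ w : ℝ × C(X, ℝ), |w.1| ∂μbase :=
      integral_nonneg fun w => abs_nonneg _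
    positivity
  -- main case
  have heps : ∀ (s : Fin n → Bool) (k : Fin n), (if s k then (1:ℝ) else -1) = eps s k :=
    fun _ _ => rfl
  have hσc : Continuous σ := hσ_lip.continuous
  have heval : ∀ k : Fin n, Measurable (fun h : C(X, ℝ) => h (x k)) :=
    fun k => (continuous_eval_const (x k)).measurable
  have hgm : ∀ k : Fin n, Measurable (fun w : ℝ × C(X, ℝ) => w.1 * σ (w.2 (x k))) :=
    fun k => measurable_fst.mul (hσc.measurable.comp ((heval k).comp measurable_snd))
  -- the index set K₀ and its properties
  set K₀ : Set (Fin n → ℝ) :=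
    {t | ∃ v : U, ‖v‖ ≤ κ ∧ ∀ k, t k = (inner ℝ v (φ k) : ℝ)} with hK₀
  have hK₀ne : K₀.Nonempty := by
    refine ⟨fun _ => 0, 0, by simpa using hκ, fun k => ?_⟩
    simp
  set Cb : ℝ := κ * Real.sqrt Gmax with hCbdef
  have hCb : 0 ≤ Cb := mul_nonneg hκ (Real.sqrt_nonneg _)
  have hφnorm : ∀ k : Fin n, ‖φ k‖ ≤ Real.sqrt Gmax := by
    intro k
    have h := hφ k
    rw [real_inner_self_eq_norm_sq] at h
    exact Real.le_sqrt_of_sq_le h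
  have hK₀b : ∀ t ∈ K₀, ∀ k, |t k| ≤ Cb := by
    rintro t ⟨v, hv, htv⟩ k
    rw [htv k]
    calc |(inner ℝ v (φ k) : ℝ)| ≤ ‖v‖ * ‖φ k‖ := abs_real_inner_le_norm v (φ k)
      _ ≤ κ * Real.sqrt Gmax :=
          mul_le_mul hv (hφnorm k) (norm_nonneg _) hκ
  -- the functions Fn and Φ
  set Fn : (Fin n → Bool) → (Fin n → ℝ) → ℝ × C(X, ℝ) → ℝ :=
    fun s t w => ∑ k, eps s k * (w.1 * (σ (w.2 (x k) + t k) - σ (w.2 (x k)))) with hFn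
  set Φ : (Fin n → Bool) → ℝ × C(X, ℝ) → ℝ :=
    fun s w => sSup ((fun t => Fn s t w) '' K₀) with hΦ
  have hFnm : ∀ s t, Measurable (Fn s t) := by
    intro s t
    apply Finset.measurable_sum
    intro k _
    exact (measurable_fst.mul ((hσc.measurable.comp
      (((heval k).comp measurable_snd).add_const (t k))).sub
      (hσc.measurable.comp ((heval k).comp measurable_snd)))).const_mul _
  have hFn_cont : ∀ s w, Continuous (fun t : Fin n → ℝ => Fn s t w) := by
    intro s w
    apply continuous_finset_sum
    intro k _
    exact continuous_const.mul (continuous_const.mul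
      ((hσc.comp (continuous_const.add (continuous_apply k))).sub continuous_const))
  have hlip_pt : ∀ (b u u' : ℝ), |σ (b + u) - σ (b + u')| ≤ (L : ℝ) * |u - u'| := by
    intro b u u'
    have h := hσ_lip.dist_le_mul (b + u) (b + u')
    rw [Real.dist_eq, Real.dist_eq] at h
    simpa [add_sub_add_left_eq_sub] using h
  have hFn_bound : ∀ s w, ∀ t ∈ K₀, |Fn s t w| ≤ (n : ℝ) * ((L : ℝ) * Cb) * |w.1| := by
    intro s w t ht
    calc |Fn s t w| ≤ ∑ k, |eps s k * (w.1 * (σ (w.2 (x k) + t k) - σ (w.2 (x k))))| :=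
          Finset.abs_sum_le_sum_abs _ _
      _ ≤ ∑ _k : Fin n, ((L : ℝ) * Cb) * |w.1| := by
          apply Finset.sum_le_sum
          intro k _
          rw [abs_mul, eps_abs, one_mul, abs_mul]
          have h1 : |σ (w.2 (x k) + t k) - σ (w.2 (x k))| ≤ (L : ℝ) * |t k| := by
            have := hlip_pt (w.2 (x k)) (t k) 0
            simpa using this
          have h2 : (L : ℝ) * |t k| ≤ (L : ℝ) * Cb :=
            mul_le_mul_of_nonneg_left (hK₀b t ht k) (L.coe_nonneg)
          calc |w.1| * |σ (w.2 (x k) + t k) - σ (w.2 (x k))| ≤ |w.1| * ((L : ℝ) * Cb) := by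
                apply mul_le_mul_of_nonneg_left _ (abs_nonneg _)
                exact h1.trans h2
            _ = ((L : ℝ) * Cb) * |w.1| := by ring
      _ = (n : ℝ) * ((L : ℝ) * Cb) * |w.1| := by
          rw [Finset.sum_const, Finset.card_univ, Fintype.card_fin, nsmul_eq_mul]
          ring
  have hΦbdd : ∀ s w, BddAbove ((fun t => Fn s t w) '' K₀) := by
    intro s w
    refine ⟨(n : ℝ) * ((L : ℝ) * Cb) * |w.1|, ?_⟩
    rintro r ⟨t, ht, rfl⟩
    exact (le_abs_self _).trans (hFn_bound s w t ht)
  have hΦne : ∀ s w, ((fun t => Fn s t w) '' K₀).Nonempty := fun s w => hK₀ne.image _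
  have hFn_zero : ∀ s w, Fn s (fun _ => 0) w = 0 := by
    intro s w
    apply Finset.sum_eq_zero
    intro k _
    simp
  have hΦ0 : ∀ s w, 0 ≤ Φ s w := by
    intro s w
    have hmem : (0 : ℝ) ∈ (fun t => Fn s t w) '' K₀ := by
      refine ⟨fun _ => 0, ?_, hFn_zero s w⟩
      exact ⟨0, by simpa using hκ, fun k => by simp⟩
    exact le_csSup (hΦbdd s w) hmem
  have hΦub : ∀ s w, Φ s w ≤ (n : ℝ) * ((L : ℝ) * Cb) * |w.1| := by
    intro s w
    apply csSup_le (hΦne s w)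
    rintro r ⟨t, ht, rfl⟩
    exact (le_abs_self _).trans (hFn_bound s w t ht)
  obtain ⟨D, hDc, hDK, hKD, hDne⟩ := exists_countable_dense_subset'' K₀ hK₀ne
  have hΦm : ∀ s, Measurable (Φ s) := by
    intro s
    haveI : Countable ↥D := hDc.to_subtype
    have hΦeq : Φ s = fun w => ⨆ p : ↥D, Fn s p.val w := by
      funext w
      have h1 : sSup ((fun t => Fn s t w) '' K₀) = sSup ((fun t => Fn s t w) '' D) :=
        sSup_image_dense _ (hFn_cont s w) K₀ D hDK hKD hDne (hΦbdd s w) hK₀ne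
      have h2 : (fun t => Fn s t w) '' D = Set.range (fun p : ↥D => Fn s p.val w) :=
        Set.image_eq_range _ _
      rw [hΦ]
      dsimp only
      rw [h1, h2]
      rfl
    rw [hΦeq]
    exact Measurable.iSup (fun p => hFnm s p.val)
  have hΦint : ∀ s, Integrable (Φ s) μbase := by
    intro s
    have hbd := hInt_a.const_mul ((n : ℝ) * ((L : ℝ) * Cb))
    apply Integrable.mono hbd (hΦm s).aestronglyMeasurable
    apply ae_of_all
    intro w
    rw [Real.norm_eq_abs, Real.norm_eq_abs, abs_of_nonneg (hΦ0 s w)]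
    exact (hΦub s w).trans (le_abs_self _)
  -- integrals
  set cI : Fin n → ℝ := fun k => ∫ w : ℝ × C(X, ℝ), w.1 * σ (w.2 (x k)) ∂μbase with hcI
  set Is : (Fin n → Bool) → ℝ := fun s => ∫ w : ℝ × C(X, ℝ), Φ s w ∂μbase with hIsdef
  -- main per-element bound
  have claim : ∀ s : Fin n → Bool, ∀ r ∈ radSet n x F s,
      r ≤ (∑ k, eps s k * cI k) + Is s := by
    intro s r hr
    obtain ⟨f, hfF, rfl⟩ := hr
    rw [hF] at hfF
    obtain ⟨μ, π, hμP, hπP, hmap1, hmap2, hS1, hfx⟩ := hfF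
    haveI := hμP; haveI := hπP
    have hp1 : Measurable (fun w : ℝ × C(X, ℝ) × C(X, ℝ) => (w.1, w.2.1)) :=
      measurable_fst.prodMk (measurable_snd.fst)
    have hp2 : Measurable (fun w : ℝ × C(X, ℝ) × C(X, ℝ) => (w.1, w.2.2)) :=
      measurable_fst.prodMk (measurable_snd.snd)
    have hint2 : ∀ k : Fin n,
        Integrable (fun w : ℝ × C(X, ℝ) × C(X, ℝ) => (w.1, w.2.2).1 * σ ((w.1, w.2.2).2 (x k))) π := by
      intro k
      have h1 : Integrable (fun w : ℝ × C(X, ℝ) => w.1 * σ (w.2 (x k)))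
          (π.map (fun w : ℝ × C(X, ℝ) × C(X, ℝ) => (w.1, w.2.2))) := by
        rw [hmap2]; exact (hfx (x k)).1
      exact (integrable_map_measure (hgm k).aestronglyMeasurable hp2.aemeasurable).mp h1
    have hint1 : ∀ k : Fin n,
        Integrable (fun w : ℝ × C(X, ℝ) × C(X, ℝ) => (w.1, w.2.1).1 * σ ((w.1, w.2.1).2 (x k))) π := by
      intro k
      have h1 : Integrable (fun w : ℝ × C(X, ℝ) => w.1 * σ (w.2 (x k)))
          (π.map (fun w : ℝ × C(X, ℝ) × C(X, ℝ) => (w.1, w.2.1))) := by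
        rw [hmap1]; exact hInt_k k
      exact (integrable_map_measure (hgm k).aestronglyMeasurable hp1.aemeasurable).mp h1
    have heq2 : ∀ k : Fin n, f (x k)
        = ∫ w : ℝ × C(X, ℝ) × C(X, ℝ), (w.1, w.2.2).1 * σ ((w.1, w.2.2).2 (x k)) ∂π := by
      intro k
      rw [(hfx (x k)).2, ← hmap2,
        integral_map hp2.aemeasurable (hgm k).aestronglyMeasurable]
    have heq1 : ∀ k : Fin n, cI k
        = ∫ w : ℝ × C(X, ℝ) × C(X, ℝ), (w.1, w.2.1).1 * σ ((w.1, w.2.1).2 (x k)) ∂π := by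
      intro k
      rw [hcI]
      dsimp only
      rw [← hmap1, integral_map hp1.aemeasurable (hgm k).aestronglyMeasurable]
    have hintS2 : Integrable
        (fun w : ℝ × C(X, ℝ) × C(X, ℝ) => ∑ k, eps s k * ((w.1, w.2.2).1 * σ ((w.1, w.2.2).2 (x k)))) π :=
      integrable_finset_sum _ (fun k _ => (hint2 k).const_mul _)
    have hintS1 : Integrable
        (fun w : ℝ × C(X, ℝ) × C(X, ℝ) => ∑ k, eps s k * ((w.1, w.2.1).1 * σ ((w.1, w.2.1).2 (x k)))) π :=
      integrable_finset_sum _ (fun k _ => (hint1 k).const_mul _)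
    have hr2 : ∑ k, eps s k * f (x k)
        = ∫ w : ℝ × C(X, ℝ) × C(X, ℝ),
            (∑ k, eps s k * ((w.1, w.2.2).1 * σ ((w.1, w.2.2).2 (x k)))) ∂π := by
      rw [integral_finset_sum _ (fun k _ => (hint2 k).const_mul _)]
      apply Finset.sum_congr rfl
      intro k _
      rw [heq2 k, integral_const_mul]
    have hc2 : (∑ k, eps s k * cI k)
        = ∫ w : ℝ × C(X, ℝ) × C(X, ℝ),
            (∑ k, eps s k * ((w.1, w.2.1).1 * σ ((w.1, w.2.1).2 (x k)))) ∂π := by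
      rw [integral_finset_sum _ (fun k _ => (hint1 k).const_mul _)]
      apply Finset.sum_congr rfl
      intro k _
      rw [heq1 k, integral_const_mul]
    have hGm : Measurable (fun w : ℝ × C(X, ℝ) × C(X, ℝ) =>
        (∑ k, eps s k * ((w.1, w.2.2).1 * σ ((w.1, w.2.2).2 (x k))))
          - (∑ k, eps s k * ((w.1, w.2.1).1 * σ ((w.1, w.2.1).2 (x k))))) := by
      apply Measurable.sub
      · exact Finset.measurable_sum _ (fun k _ => ((hgm k).comp hp2).const_mul _)
      · exact Finset.measurable_sum _ (fun k _ => ((hgm k).comp hp1).const_mul _)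
    have hΦp1m : Measurable (fun w : ℝ × C(X, ℝ) × C(X, ℝ) => Φ s (w.1, w.2.1)) :=
      (hΦm s).comp hp1
    have hbound_on_S : ∀ w : ℝ × C(X, ℝ) × C(X, ℝ),
        (∃ u : U, ‖u‖ ≤ κ ∧ w.2.2 = w.2.1 + ι u) →
        (∑ k, eps s k * ((w.1, w.2.2).1 * σ ((w.1, w.2.2).2 (x k))))
          - (∑ k, eps s k * ((w.1, w.2.1).1 * σ ((w.1, w.2.1).2 (x k))))
          ≤ Φ s (w.1, w.2.1) := by
      rintro w ⟨v, hvκ, hw22⟩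
      have htK : (fun k => (inner ℝ v (φ k) : ℝ)) ∈ K₀ := ⟨v, hvκ, fun k => rfl⟩
      have hkey : (∑ k, eps s k * ((w.1, w.2.2).1 * σ ((w.1, w.2.2).2 (x k))))
          - (∑ k, eps s k * ((w.1, w.2.1).1 * σ ((w.1, w.2.1).2 (x k))))
          = Fn s (fun k => (inner ℝ v (φ k) : ℝ)) (w.1, w.2.1) := by
        rw [← Finset.sum_sub_distrib]
        apply Finset.sum_congr rfl
        intro k _
        have hev' : w.2.2 (x k) = w.2.1 (x k) + (inner ℝ v (φ k) : ℝ) := by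
          rw [hw22, ContinuousMap.add_apply, hev v k]
        simp only [hFn]
        rw [hev']
        ring
      rw [hkey]
      exact le_csSup (hΦbdd s (w.1, w.2.1)) ⟨_, htK, rfl⟩
    have hAnull : π {w : ℝ × C(X, ℝ) × C(X, ℝ) |
        ¬ ((∑ k, eps s k * ((w.1, w.2.2).1 * σ ((w.1, w.2.2).2 (x k))))
          - (∑ k, eps s k * ((w.1, w.2.1).1 * σ ((w.1, w.2.1).2 (x k))))
          ≤ Φ s (w.1, w.2.1))} = 0 := by
      apply null_of_measurable_subset_compl π hS1
      · exact (measurableSet_le hGm hΦp1m).compl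
      · intro w hw
        exact fun hwS => hw (hbound_on_S w hwS)
    have hae : ∀ᵐ (w : ℝ × C(X, ℝ) × C(X, ℝ)) ∂π,
        (∑ k, eps s k * ((w.1, w.2.2).1 * σ ((w.1, w.2.2).2 (x k))))
          - (∑ k, eps s k * ((w.1, w.2.1).1 * σ ((w.1, w.2.1).2 (x k))))
          ≤ Φ s (w.1, w.2.1) := by
      rw [MeasureTheory.ae_iff]
      exact hAnull
    have hΦp1int : Integrable (fun w : ℝ × C(X, ℝ) × C(X, ℝ) => Φ s (w.1, w.2.1)) π := by
      have h1 : Integrable (Φ s) (π.map (fun w : ℝ × C(X, ℝ) × C(X, ℝ) => (w.1, w.2.1))) := by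
        rw [hmap1]; exact hΦint s
      exact (integrable_map_measure (hΦm s).aestronglyMeasurable hp1.aemeasurable).mp h1
    have hIseq : ∫ w : ℝ × C(X, ℝ) × C(X, ℝ), Φ s (w.1, w.2.1) ∂π = Is s := by
      rw [hIsdef]
      dsimp only
      rw [← hmap1, integral_map hp1.aemeasurable (hΦm s).aestronglyMeasurable]
    have hfinal : (∑ k, eps s k * f (x k)) - (∑ k, eps s k * cI k) ≤ Is s := by
      rw [hr2, hc2, ← integral_sub hintS2 hintS1, ← hIseq]
      exact integral_mono_ae (hintS2.sub hintS1) hΦp1int hae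
    have hre : ∑ k, (if s k then (1:ℝ) else -1) * f (x k) = ∑ k, eps s k * f (x k) := rfl
    rw [hre]
    linarith
  -- suprema are bounded by claim
  have hradne : ∀ s : Fin n → Bool, (radSet n x F s).Nonempty := by
    intro s
    obtain ⟨f0, hf0⟩ := hFne
    exact ⟨∑ k, (if s k then (1:ℝ) else -1) * f0 (x k), f0, hf0, rfl⟩
  have hsup : ∀ s : Fin n → Bool,
      sSup (radSet n x F s) ≤ (∑ k, eps s k * cI k) + Is s :=
    fun s => csSup_le (hradne s) (claim s)
  -- sum of the sign-pattern baselines vanishes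
  have hCs0 : ∑ s : Fin n → Bool, ∑ k, eps s k * cI k = 0 := by
    rw [Finset.sum_comm]
    apply Finset.sum_eq_zero
    intro k _
    apply flip_sum_zero k
    intro s
    rw [eps_flipAt_self]
    ring
  -- contraction bound, pointwise in w
  set ws : (Fin n → Bool) → U := fun s => ∑ k, eps s k • φ k with hws
  have hsum_pt : ∀ w : ℝ × C(X, ℝ),
      ∑ s : Fin n → Bool, Φ s w
        ≤ (|w.1| * (L : ℝ)) * (κ * ∑ s : Fin n → Bool, ‖ws s‖) := by
    intro w
    have hM0 : 0 ≤ |w.1| * (L : ℝ) := mul_nonneg (abs_nonneg _) L.coe_nonneg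
    have hcontr := rad_contraction K₀ hK₀ne Cb hCb hK₀b (|w.1| * (L : ℝ)) hM0
      (fun k u => w.1 * (σ (w.2 (x k) + u) - σ (w.2 (x k))))
      (fun k => by simp)
      (fun k u u' => by
        have hl := hlip_pt (w.2 (x k)) u u'
        calc w.1 * (σ (w.2 (x k) + u) - σ (w.2 (x k)))
              - w.1 * (σ (w.2 (x k) + u') - σ (w.2 (x k)))
            = w.1 * (σ (w.2 (x k) + u) - σ (w.2 (x k) + u')) := by ring
          _ ≤ |w.1 * (σ (w.2 (x k) + u) - σ (w.2 (x k) + u'))| := le_abs_self _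
          _ = |w.1| * |σ (w.2 (x k) + u) - σ (w.2 (x k) + u')| := abs_mul _ _
          _ ≤ |w.1| * ((L : ℝ) * |u - u'|) := mul_le_mul_of_nonneg_left hl (abs_nonneg _)
          _ = (|w.1| * (L : ℝ)) * |u - u'| := by ring)
    have hLHS : ∑ s : Fin n → Bool, Φ s w
        = ∑ s : Fin n → Bool, sSup ((fun t => ∑ k, eps s k *
            (w.1 * (σ (w.2 (x k) + t k) - σ (w.2 (x k))))) '' K₀) := rfl
    have hRHS : ∀ s : Fin n → Bool,
        sSup ((fun t => ∑ k, eps s k * ((|w.1| * (L : ℝ)) * t k)) '' K₀)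
          ≤ (|w.1| * (L : ℝ)) * (κ * ‖ws s‖) := by
      intro s
      apply csSup_le (hK₀ne.image _)
      rintro r ⟨t, ⟨v, hv, htv⟩, rfl⟩
      dsimp only
      have hip : ∑ k, eps s k * t k = (inner ℝ v (ws s) : ℝ) := by
        rw [hws]
        dsimp only
        rw [inner_sum]
        apply Finset.sum_congr rfl
        intro k _
        rw [real_inner_smul_right, htv k]
      calc ∑ k, eps s k * ((|w.1| * (L : ℝ)) * t k)
          = (|w.1| * (L : ℝ)) * ∑ k, eps s k * t k := by
            rw [Finset.mul_sum]
            apply Finset.sum_congr rfl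
            intro k _
            ring
        _ = (|w.1| * (L : ℝ)) * (inner ℝ v (ws s) : ℝ) := by rw [hip]
        _ ≤ (|w.1| * (L : ℝ)) * (κ * ‖ws s‖) := by
            apply mul_le_mul_of_nonneg_left _ hM0
            calc (inner ℝ v (ws s) : ℝ) ≤ ‖v‖ * ‖ws s‖ := real_inner_le_norm v (ws s)
              _ ≤ κ * ‖ws s‖ := mul_le_mul_of_nonneg_right hv (norm_nonneg _)
    calc ∑ s : Fin n → Bool, Φ s w
        ≤ ∑ s : Fin n → Bool,
            sSup ((fun t => ∑ k, eps s k * ((|w.1| * (L : ℝ)) * t k)) '' K₀) := by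
          rw [hLHS]
          exact hcontr
      _ ≤ ∑ s : Fin n → Bool, (|w.1| * (L : ℝ)) * (κ * ‖ws s‖) :=
          Finset.sum_le_sum (fun s _ => hRHS s)
      _ = (|w.1| * (L : ℝ)) * (κ * ∑ s : Fin n → Bool, ‖ws s‖) := by
          rw [← Finset.mul_sum, ← Finset.mul_sum]
  -- bound on ∑_s ‖ws s‖
  have hcard : ((Finset.univ : Finset (Fin n → Bool)).card : ℝ) = (2 : ℝ) ^ n := by
    rw [Finset.card_univ, Fintype.card_fun]
    push_cast
    simp
  have hsum2 : ∑ s : Fin n → Bool, ‖ws s‖ ^ 2 ≤ (2 : ℝ) ^ n * ((n : ℝ) * Gmax) := by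
    have hnormsq : ∀ s : Fin n → Bool,
        ‖ws s‖ ^ 2 = ∑ j, ∑ k, eps s j * (eps s k * (inner ℝ (φ j) (φ k) : ℝ)) := by
      intro s
      rw [← real_inner_self_eq_norm_sq, hws]
      dsimp only
      rw [sum_inner]
      apply Finset.sum_congr rfl
      intro j _
      rw [real_inner_smul_left, inner_sum, Finset.mul_sum]
      apply Finset.sum_congr rfl
      intro k _
      rw [real_inner_smul_right]
    have hdiag : ∀ j : Fin n,
        ∑ s : Fin n → Bool, eps s j * (eps s j * (inner ℝ (φ j) (φ j) : ℝ))
          = (2 : ℝ) ^ n * (inner ℝ (φ j) (φ j) : ℝ) := by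
      intro j
      have h1 : ∀ s : Fin n → Bool,
          eps s j * (eps s j * (inner ℝ (φ j) (φ j) : ℝ)) = (inner ℝ (φ j) (φ j) : ℝ) := by
        intro s
        have : eps s j * eps s j = 1 := by unfold eps; split_ifs <;> ring
        calc eps s j * (eps s j * (inner ℝ (φ j) (φ j) : ℝ))
            = (eps s j * eps s j) * (inner ℝ (φ j) (φ j) : ℝ) := by ring
          _ = (inner ℝ (φ j) (φ j) : ℝ) := by rw [this, one_mul]
      rw [Finset.sum_congr rfl (fun s _ => h1 s), Finset.sum_const, nsmul_eq_mul, hcard]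
    have hcross : ∀ j k : Fin n, j ≠ k →
        ∑ s : Fin n → Bool, eps s j * (eps s k * (inner ℝ (φ j) (φ k) : ℝ)) = 0 := by
      intro j k hjk
      apply flip_sum_zero k
      intro s
      rw [eps_flipAt_ne s hjk, eps_flipAt_self]
      ring
    calc ∑ s : Fin n → Bool, ‖ws s‖ ^ 2
        = ∑ s : Fin n → Bool, ∑ j, ∑ k, eps s j * (eps s k * (inner ℝ (φ j) (φ k) : ℝ)) :=
          Finset.sum_congr rfl (fun s _ => hnormsq s)
      _ = ∑ j, ∑ s : Fin n → Bool, ∑ k, eps s j * (eps s k * (inner ℝ (φ j) (φ k) : ℝ)) :=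
          Finset.sum_comm
      _ = ∑ j, ∑ k, ∑ s : Fin n → Bool, eps s j * (eps s k * (inner ℝ (φ j) (φ k) : ℝ)) :=
          Finset.sum_congr rfl (fun j _ => Finset.sum_comm)
      _ = ∑ j : Fin n, (2 : ℝ) ^ n * (inner ℝ (φ j) (φ j) : ℝ) := by
          apply Finset.sum_congr rfl
          intro j _
          rw [Finset.sum_eq_single j]
          · exact hdiag j
          · intro k _ hkj
            exact hcross j k (Ne.symm hkj)
          · intro h
            exact absurd (Finset.mem_univ j) h
      _ ≤ ∑ _j : Fin n, (2 : ℝ) ^ n * Gmax := by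
          apply Finset.sum_le_sum
          intro j _
          exact mul_le_mul_of_nonneg_left (hφ j) (by positivity)
      _ = (2 : ℝ) ^ n * ((n : ℝ) * Gmax) := by
          rw [Finset.sum_const, Finset.card_univ, Fintype.card_fin, nsmul_eq_mul]
          ring
  have hBs : ∑ s : Fin n → Bool, ‖ws s‖
      ≤ (2 : ℝ) ^ n * (Real.sqrt n * Real.sqrt Gmax) := by
    have h0 : 0 ≤ ∑ s : Fin n → Bool, ‖ws s‖ :=
      Finset.sum_nonneg fun s _ => norm_nonneg _
    have hR : (0 : ℝ) ≤ (2 : ℝ) ^ n * (Real.sqrt n * Real.sqrt Gmax) := by positivity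
    have hsq : (∑ s : Fin n → Bool, ‖ws s‖) ^ 2
        ≤ ((2 : ℝ) ^ n * (Real.sqrt n * Real.sqrt Gmax)) ^ 2 := by
      have hcs := sq_sum_le_card_mul_sum_sq (s := (Finset.univ : Finset (Fin n → Bool)))
        (f := fun s => ‖ws s‖)
      have hexp : ((2 : ℝ) ^ n * (Real.sqrt n * Real.sqrt Gmax)) ^ 2
          = (2 : ℝ) ^ n * ((2 : ℝ) ^ n * ((n : ℝ) * Gmax)) := by
        rw [mul_pow, mul_pow, Real.sq_sqrt (Nat.cast_nonneg n), Real.sq_sqrt hGmax0]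
        ring
      rw [hexp]
      calc (∑ s : Fin n → Bool, ‖ws s‖) ^ 2
          ≤ ((Finset.univ : Finset (Fin n → Bool)).card : ℝ) * ∑ s : Fin n → Bool, ‖ws s‖ ^ 2 := by
            exact_mod_cast hcs
        _ = (2 : ℝ) ^ n * ∑ s : Fin n → Bool, ‖ws s‖ ^ 2 := by rw [hcard]
        _ ≤ (2 : ℝ) ^ n * ((2 : ℝ) ^ n * ((n : ℝ) * Gmax)) :=
            mul_le_mul_of_nonneg_left hsum2 (by positivity)
    calc ∑ s : Fin n → Bool, ‖ws s‖
        = Real.sqrt ((∑ s : Fin n → Bool, ‖ws s‖) ^ 2) := (Real.sqrt_sq h0).symm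
      _ ≤ Real.sqrt (((2 : ℝ) ^ n * (Real.sqrt n * Real.sqrt Gmax)) ^ 2) :=
          Real.sqrt_le_sqrt hsq
      _ = (2 : ℝ) ^ n * (Real.sqrt n * Real.sqrt Gmax) := Real.sqrt_sq hR
  -- integrate the pointwise bound
  set abar : ℝ := ∫ w : ℝ × C(X, ℝ), |w.1| ∂μbase with habar
  have habar0 : 0 ≤ abar := integral_nonneg fun w => abs_nonneg _
  have hIsum : ∑ s : Fin n → Bool, Is s
      ≤ ((L : ℝ) * (κ * ((2 : ℝ) ^ n * (Real.sqrt n * Real.sqrt Gmax)))) * abar := by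
    have h1 : ∑ s : Fin n → Bool, Is s = ∫ w : ℝ × C(X, ℝ), (∑ s : Fin n → Bool, Φ s w) ∂μbase :=
      (integral_finset_sum _ (fun s _ => hΦint s)).symm
    have h2 : ∫ w : ℝ × C(X, ℝ), (∑ s : Fin n → Bool, Φ s w) ∂μbase
        ≤ ∫ w : ℝ × C(X, ℝ),
            ((L : ℝ) * (κ * ((2 : ℝ) ^ n * (Real.sqrt n * Real.sqrt Gmax)))) * |w.1| ∂μbase := by
      apply integral_mono (integrable_finset_sum _ (fun s _ => hΦint s)) (hInt_a.const_mul _)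
      intro w
      calc ∑ s : Fin n → Bool, Φ s w
          ≤ (|w.1| * (L : ℝ)) * (κ * ∑ s : Fin n → Bool, ‖ws s‖) := hsum_pt w
        _ ≤ (|w.1| * (L : ℝ)) * (κ * ((2 : ℝ) ^ n * (Real.sqrt n * Real.sqrt Gmax))) := by
            apply mul_le_mul_of_nonneg_left _ (mul_nonneg (abs_nonneg _) L.coe_nonneg)
            exact mul_le_mul_of_nonneg_left hBs hκ
        _ = ((L : ℝ) * (κ * ((2 : ℝ) ^ n * (Real.sqrt n * Real.sqrt Gmax)))) * |w.1| := by ring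
    rw [h1]
    apply h2.trans
    rw [integral_const_mul]
  -- assemble
  have htot : ∑ s : Fin n → Bool, sSup (radSet n x F s)
      ≤ ((L : ℝ) * (κ * ((2 : ℝ) ^ n * (Real.sqrt n * Real.sqrt Gmax)))) * abar := by
    calc ∑ s : Fin n → Bool, sSup (radSet n x F s)
        ≤ ∑ s : Fin n → Bool, ((∑ k, eps s k * cI k) + Is s) :=
          Finset.sum_le_sum fun s _ => hsup s
      _ = (∑ s : Fin n → Bool, ∑ k, eps s k * cI k) + ∑ s : Fin n → Bool, Is s :=
          Finset.sum_add_distrib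
      _ = ∑ s : Fin n → Bool, Is s := by rw [hCs0, zero_add]
      _ ≤ _ := hIsum
  have hLHS : empRad n x F = (n : ℝ)⁻¹ * ((2 ^ n : ℝ))⁻¹ * ∑ s : Fin n → Bool, sSup (radSet n x F s) := rfl
  rw [hLHS]
  have hfac : (0 : ℝ) ≤ (n : ℝ)⁻¹ * ((2 ^ n : ℝ))⁻¹ := by positivity
  have hstep := mul_le_mul_of_nonneg_left htot hfac
  apply le_of_le_of_eq hstep
  -- algebra
  have hn : (0 : ℝ) < (n : ℝ) := by exact_mod_cast hnpos
  have hsn : Real.sqrt n ≠ 0 := ne_of_gt (Real.sqrt_pos.mpr hn)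
  have h2n : ((2 : ℝ) ^ n) ≠ 0 := by positivity
  have hss : Real.sqrt n * Real.sqrt n = (n : ℝ) := Real.mul_self_sqrt hn.le
  field_simp
  linear_combination ((L : ℝ) * κ * Real.sqrt Gmax * abar) * hss

end
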